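/- Let g be a gflow with extensive order ≺ and define g_Z(u) = g(u) △ (△_{v ∈ g(u)\(O∪{u})} g_Z(v)). Then g_Z is extensive with respect to the same order ≺: for all u ∈ Oᶜ and all w ∈ g_Z(u) ∪ Odd(g_Z(u)) with w ≠ u, u ≺ w. -/

import Mathlib

open scoped symmDiff

inductive Pauli | X | Y | Z
deriving DecidableEq

inductive MPlane | XY | XZ | YZ
deriving DecidableEq

/-- The set of Pauli operators defining a measurement plane. -/
def MPlane.paulis : MPlane → Finset Pauli
  | .XY => {.X, .Y}
  | .XZ => {.X, .Z}
  | .YZ => {.Y, .Z}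

variable {V : Type} [Fintype V] [DecidableEq V]

/-- Odd neighbourhood: vertices with an odd number of neighbours in `A`. -/
def oddNbhd (G : SimpleGraph V) [DecidableRel G.Adj] (A : Finset V) : Finset V :=
  Finset.univ.filter fun w => Odd (A.filter (G.Adj w)).card

/-- `f` is extensive w.r.t. the strict order `r`. -/
def IsExtensive (O : Finset V) (r : V → V → Prop) (f : V → Finset V) : Prop :=
  ∀ u ∉ O, ∀ v ∈ f u, v ≠ u → r u v

/-- gflow of an extended open graph `(G, I, O, lam)`. -/
def IsGflow (G : SimpleGraph V) [DecidableRel G.Adj]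
    (I O : Finset V) (lam : V → MPlane) (g : V → Finset V) : Prop :=
  (∀ u ∉ O, g u ⊆ Iᶜ) ∧
  (∃ r : V → V → Prop, IsStrictOrder V r ∧
    IsExtensive O r (fun u => g u ∪ oddNbhd G (g u))) ∧
  ∀ u ∉ O,
    (lam u = .XY → u ∈ oddNbhd G (g u) ∧ u ∉ g u) ∧
    (lam u = .XZ → u ∈ g u ∧ u ∈ oddNbhd G (g u)) ∧
    (lam u = .YZ → u ∈ g u ∧ u ∉ oddNbhd G (g u))

/-- σ-normal forms for gflows. -/
def IsNF (σ : Pauli) (G : SimpleGraph V) [DecidableRel G.Adj]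
    (O : Finset V) (g : V → Finset V) : Prop :=
  match σ with
  | .X => ∀ u ∉ O, oddNbhd G (g u) ⊆ insert u O
  | .Y => ∀ u ∉ O, (g u ∆ oddNbhd G (g u)) ⊆ insert u O
  | .Z => ∀ u ∉ O, g u ⊆ insert u O
instance : Std.Commutative (α := Finset V) (· ∆ ·) := ⟨symmDiff_comm⟩
instance : Std.Associative (α := Finset V) (· ∆ ·) := ⟨symmDiff_assoc⟩

/-- Iterated symmetric difference `△_{v ∈ s} f v`. -/
def symmDiffFold (s : Finset V) (f : V → Finset V) : Finset V :=
  s.fold (· ∆ ·) ∅ f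


set_option linter.unusedSectionVars false in
lemma card_symmDiff_parity (s t : Finset V) :
    Odd (s ∆ t).card ↔ ¬ (Odd s.card ↔ Odd t.card) := by
  have h1 : s ∆ t = (s ∪ t) \ (s ∩ t) := by
    ext x; simp [Finset.mem_symmDiff]; tauto
  have h2 := Finset.card_union_add_card_inter s t
  have h3 : ((s ∪ t) \ (s ∩ t)).card = (s ∪ t).card - (s ∩ t).card :=
    Finset.card_sdiff_of_subset (Finset.inter_subset_union)
  have h4 : (s ∩ t).card ≤ (s ∪ t).card := Finset.card_le_card Finset.inter_subset_union
  rw [h1, h3]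
  simp only [Nat.odd_iff] at *
  omega

lemma oddNbhd_symmDiff (G : SimpleGraph V) [DecidableRel G.Adj] (A B : Finset V) :
    oddNbhd G (A ∆ B) = oddNbhd G A ∆ oddNbhd G B := by
  ext w
  have hfil : (A ∆ B).filter (G.Adj w) = A.filter (G.Adj w) ∆ B.filter (G.Adj w) := by
    ext x; simp [Finset.mem_symmDiff, Finset.mem_filter]; tauto
  simp only [oddNbhd, Finset.mem_symmDiff, Finset.mem_filter, Finset.mem_univ, true_and, hfil,
    card_symmDiff_parity]
  tauto

set_option linter.unusedSectionVars false in
lemma oddNbhd_empty (G : SimpleGraph V) [DecidableRel G.Adj] :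
    oddNbhd G (∅ : Finset V) = ∅ := by
  simp [oddNbhd]

lemma oddNbhd_symmDiffFold (G : SimpleGraph V) [DecidableRel G.Adj]
    (s : Finset V) (f : V → Finset V) :
    oddNbhd G (symmDiffFold s f) = symmDiffFold s (fun v => oddNbhd G (f v)) := by
  classical
  induction s using Finset.induction with
  | empty => simp [symmDiffFold, oddNbhd_empty]
  | insert _ _ ha ih =>
      rw [symmDiffFold, symmDiffFold, Finset.fold_insert ha, Finset.fold_insert ha,
        oddNbhd_symmDiff, ← symmDiffFold, ← symmDiffFold, ih]

lemma mem_symmDiffFold {s : Finset V} {f : V → Finset V} {w : V}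
    (hw : w ∈ symmDiffFold s f) : ∃ v ∈ s, w ∈ f v := by
  classical
  induction s using Finset.induction with
  | empty => simp [symmDiffFold] at hw
  | @insert a s ha ih =>
      rw [symmDiffFold, Finset.fold_insert ha, ← symmDiffFold, Finset.mem_symmDiff] at hw
      rcases hw with ⟨h1, -⟩ | ⟨h1, -⟩
      · exact ⟨a, Finset.mem_insert_self a s, h1⟩
      · obtain ⟨v, hv, hw⟩ := ih h1
        exact ⟨v, Finset.mem_insert_of_mem hv, hw⟩

/-- The recursively defined `g_Z` is extensive with respect to the same order as `g`. -/
theorem gZ_extensive (G : SimpleGraph V) [DecidableRel G.Adj]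
    (I O : Finset V) (lam : V → MPlane) (g : V → Finset V)
    (r : V → V → Prop) (hr : IsStrictOrder V r)
    (hext : IsExtensive O r (fun u => g u ∪ oddNbhd G (g u)))
    (hg : IsGflow G I O lam g)
    (gZ : V → Finset V)
    (hgZ : ∀ u ∉ O, gZ u = g u ∆ symmDiffFold ((g u) \ insert u O) gZ) :
    IsExtensive O r (fun u => gZ u ∪ oddNbhd G (gZ u)) := by
  classical
  haveI := hr.toIrrefl
  haveI := hr.toIsTrans
  haveI irr : IsIrrefl V (Function.swap r) := ⟨fun a h => irrefl (r := r) a h⟩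
  haveI instTr : IsTrans V (Function.swap r) :=
    ⟨fun a b c h1 h2 => IsTrans.trans (r := r) c b a h2 h1⟩
  have wf : WellFounded (Function.swap r) := Finite.wellFounded_of_trans_of_irrefl _
  intro u hu
  induction u using wf.induction with
  | _ u ih =>
    intro w hw hne
    -- decompose gZ u
    have hrec := hgZ u hu
    set s := (g u) \ insert u O with hs
    -- membership in gZ u ∪ oddNbhd (gZ u) comes from g u side or some gZ v side
    have key : (w ∈ g u ∪ oddNbhd G (g u)) ∨ ∃ v ∈ s, w ∈ gZ v ∪ oddNbhd G (gZ v) := by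
      rcases Finset.mem_union.1 hw with h | h
      · rw [hrec, Finset.mem_symmDiff] at h
        rcases h with ⟨h1, -⟩ | ⟨h1, -⟩
        · exact Or.inl (Finset.mem_union_left _ h1)
        · obtain ⟨v, hv, hwv⟩ := mem_symmDiffFold h1
          exact Or.inr ⟨v, hv, Finset.mem_union_left _ hwv⟩
      · rw [hrec, oddNbhd_symmDiff, oddNbhd_symmDiffFold, Finset.mem_symmDiff] at h
        rcases h with ⟨h1, -⟩ | ⟨h1, -⟩
        · exact Or.inl (Finset.mem_union_right _ h1)
        · obtain ⟨v, hv, hwv⟩ := mem_symmDiffFold h1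
          exact Or.inr ⟨v, hv, Finset.mem_union_right _ hwv⟩
    rcases key with h | ⟨v, hv, hwv⟩
    · exact hext u hu w h hne
    · have hvmem := Finset.mem_sdiff.1 hv
      have hvne : v ≠ u := fun h => (hvmem.2 (h ▸ Finset.mem_insert_self u O))
      have hvO : v ∉ O := fun h => hvmem.2 (Finset.mem_insert_of_mem h)
      have huv : r u v := hext u hu v (Finset.mem_union_left _ hvmem.1) hvne
      by_cases hwu : w = v
      · exact hwu ▸ huv
      · exact IsTrans.trans (r := r) u v w huv (ih v huv hvO w hwv hwu)
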